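/- arXiv:2007.15762 — 2 statements merged into one kernel-verified Lean document; each statement's English description precedes it below -/
import Mathlib

section
/- Let A be a graded-commutative differential bigraded algebra generated over ℂ by degree-(1,0) elements φ₁,…,φ₅ and their conjugates φ̄₁,…,φ̄₅ with ∂φ₁ = ∂φ₂ = 0, ∂φ₃ = φ₁∧φ₂, ∂φ₄ = φ₁∧φ₃, ∂φ₅ = φ₂∧φ₃, ∂̄φ_j = 0 for all j, and the conjugate relations. Then φ₁∧φ₂∧φ₄∧φ₅∧φ̄₁∧φ̄₂ = ∂̄∂(φ₃∧φ₄∧φ₅∧φ̄₃), φ₁∧φ₂∧φ₃∧φ₅∧φ̄₁∧φ̄₂ = ∂̄∂(φ₂∧φ₄∧φ₅∧φ̄₃), and φ₁∧φ₂∧φ₃∧φ₄∧φ̄₁∧φ̄₂ = ∂̄∂(φ₁∧φ₄∧φ₅∧φ̄₃). -/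
/-- In the graded-commutative differential bigraded algebra generated by degree-(1,0) elements
φ₁,…,φ₅ and their conjugates φ̄₁,…,φ̄₅ (here `φ 0,…,φ 4` and `φb 0,…,φb 4`), with
∂φ₁ = ∂φ₂ = 0, ∂φ₃ = φ₁∧φ₂, ∂φ₄ = φ₁∧φ₃, ∂φ₅ = φ₂∧φ₃, ∂̄φⱼ = 0 and the conjugate relations,
where `del`, `delbar` are anti-derivations (generators anticommute, and the Leibniz rule with
sign holds for left multiplication by a generator), the three ∂̄∂-exactness identities of the
paper hold:
φ₁φ₂φ₄φ₅φ̄₁φ̄₂ = ∂̄∂(φ₃φ₄φ₅φ̄₃), φ₁φ₂φ₃φ₅φ̄₁φ̄₂ = ∂̄∂(φ₂φ₄φ₅φ̄₃), φ₁φ₂φ₃φ₄φ̄₁φ̄₂ = ∂̄∂(φ₁φ₄φ₅φ̄₃). -/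
theorem stmt8 {A : Type*} [Ring A] [Algebra ℂ A]
    (φ φb : Fin 5 → A) (del delbar : A →ₗ[ℂ] A)
    (S : Set A) (hS : S = Set.range φ ∪ Set.range φb)
    (hanti : ∀ g ∈ S, ∀ h ∈ S, g * h = -(h * g))
    (hLd : ∀ g ∈ S, ∀ x : A, del (g * x) = del g * x - g * del x)
    (hLdb : ∀ g ∈ S, ∀ x : A, delbar (g * x) = delbar g * x - g * delbar x)
    (hd0 : del (φ 0) = 0) (hd1 : del (φ 1) = 0)
    (hd2 : del (φ 2) = φ 0 * φ 1) (hd3 : del (φ 3) = φ 0 * φ 2) (hd4 : del (φ 4) = φ 1 * φ 2)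
    (hdbφ : ∀ j, delbar (φ j) = 0)
    (hdelφb : ∀ j, del (φb j) = 0)
    (hdb0 : delbar (φb 0) = 0) (hdb1 : delbar (φb 1) = 0)
    (hdb2 : delbar (φb 2) = φb 0 * φb 1) (hdb3 : delbar (φb 3) = φb 0 * φb 2)
    (hdb4 : delbar (φb 4) = φb 1 * φb 2) :
    φ 0 * φ 1 * φ 3 * φ 4 * φb 0 * φb 1 = delbar (del (φ 2 * φ 3 * φ 4 * φb 2)) ∧
    φ 0 * φ 1 * φ 2 * φ 4 * φb 0 * φb 1 = delbar (del (φ 1 * φ 3 * φ 4 * φb 2)) ∧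
    φ 0 * φ 1 * φ 2 * φ 3 * φb 0 * φb 1 = delbar (del (φ 0 * φ 3 * φ 4 * φb 2)) := by
  have hg : ∀ j, φ j ∈ S := by rw [hS]; exact fun j => Or.inl ⟨j, rfl⟩
  have hgb : ∀ j, φb j ∈ S := by rw [hS]; exact fun j => Or.inr ⟨j, rfl⟩
  have sq : ∀ g ∈ S, g * g = 0 := by
    intro g hgS
    have h := hanti g hgS g hgS
    have h2 : (2:ℂ) • (g * g) = 0 := by
      rw [two_smul]
      nth_rewrite 2 [h]
      simp
    calc g * g = ((2:ℂ)⁻¹ * 2) • (g * g) := by norm_num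
    _ = (2:ℂ)⁻¹ • ((2:ℂ) • (g * g)) := by rw [smul_smul]
    _ = 0 := by rw [h2, smul_zero]
  have swap : ∀ g ∈ S, ∀ h ∈ S, ∀ x : A, g * (h * x) = -(h * (g * x)) := by
    intro g hgS h hhS x
    rw [← mul_assoc, hanti g hgS h hhS, neg_mul, mul_assoc]
  have sqz : ∀ g ∈ S, ∀ x : A, g * (g * x) = 0 := by
    intro g hgS x; rw [← mul_assoc, sq g hgS, zero_mul]
  -- del of the inner pieces
  have d1 : del (φ 4 * φb 2) = φ 1 * (φ 2 * φb 2) := by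
    rw [hLd _ (hg 4), hd4, hdelφb, mul_zero, sub_zero, mul_assoc]
  have d2 : del (φ 3 * (φ 4 * φb 2))
      = φ 0 * (φ 2 * (φ 4 * φb 2)) - φ 3 * (φ 1 * (φ 2 * φb 2)) := by
    rw [hLd _ (hg 3), hd3, d1, mul_assoc]
  -- delbar computation for products of four φ's ending in φb 2
  have db : ∀ x : A, x ∈ Set.range φ → ∀ y : A, y ∈ Set.range φ → ∀ z : A, z ∈ Set.range φ →
      ∀ w : A, w ∈ Set.range φ →
      delbar (x * (y * (z * (w * φb 2)))) = x * (y * (z * (w * (φb 0 * φb 1)))) := by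
    rintro _ ⟨i, rfl⟩ _ ⟨j, rfl⟩ _ ⟨k, rfl⟩ _ ⟨l, rfl⟩
    rw [hLdb _ (hg i), hLdb _ (hg j), hLdb _ (hg k), hLdb _ (hg l)]
    simp [hdbφ, hdb2, mul_assoc]
  refine ⟨?_, ?_, ?_⟩
  · have d3 : del (φ 2 * (φ 3 * (φ 4 * φb 2))) = φ 0 * (φ 1 * (φ 3 * (φ 4 * φb 2))) := by
      rw [hLd _ (hg 2), hd2, d2, mul_assoc, mul_sub]
      have e1 : φ 2 * (φ 0 * (φ 2 * (φ 4 * φb 2))) = 0 := by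
        rw [swap _ (hg 2) _ (hg 0), sqz _ (hg 2), mul_zero, neg_zero]
      have e2 : φ 2 * (φ 3 * (φ 1 * (φ 2 * φb 2))) = 0 := by
        rw [swap _ (hg 2) _ (hg 3), swap _ (hg 2) _ (hg 1), sqz _ (hg 2)]
        simp
      rw [e1, e2]; abel
    have key : φ 2 * φ 3 * φ 4 * φb 2 = φ 2 * (φ 3 * (φ 4 * φb 2)) := by
      simp [mul_assoc]
    rw [key, d3, db _ ⟨0, rfl⟩ _ ⟨1, rfl⟩ _ ⟨3, rfl⟩ _ ⟨4, rfl⟩]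
    simp [mul_assoc]
  · have d3 : del (φ 1 * (φ 3 * (φ 4 * φb 2))) = φ 0 * (φ 1 * (φ 2 * (φ 4 * φb 2))) := by
      rw [hLd _ (hg 1), hd1, d2, zero_mul, mul_sub]
      have e2 : φ 1 * (φ 3 * (φ 1 * (φ 2 * φb 2))) = 0 := by
        rw [swap _ (hg 1) _ (hg 3), sqz _ (hg 1)]
        simp
      have e1 : φ 1 * (φ 0 * (φ 2 * (φ 4 * φb 2)))
          = -(φ 0 * (φ 1 * (φ 2 * (φ 4 * φb 2)))) := swap _ (hg 1) _ (hg 0) _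
      rw [e1, e2]; abel
    have key : φ 1 * φ 3 * φ 4 * φb 2 = φ 1 * (φ 3 * (φ 4 * φb 2)) := by
      simp [mul_assoc]
    rw [key, d3, db _ ⟨0, rfl⟩ _ ⟨1, rfl⟩ _ ⟨2, rfl⟩ _ ⟨4, rfl⟩]
    simp [mul_assoc]
  · have d3 : del (φ 0 * (φ 3 * (φ 4 * φb 2))) = φ 0 * (φ 1 * (φ 2 * (φ 3 * φb 2))) := by
      rw [hLd _ (hg 0), hd0, d2, zero_mul, mul_sub]
      have e1 : φ 0 * (φ 0 * (φ 2 * (φ 4 * φb 2))) = 0 := sqz _ (hg 0) _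
      have e2 : φ 0 * (φ 3 * (φ 1 * (φ 2 * φb 2)))
          = φ 0 * (φ 1 * (φ 2 * (φ 3 * φb 2))) := by
        rw [swap _ (hg 3) _ (hg 1) (φ 2 * φb 2), swap _ (hg 3) _ (hg 2) (φb 2)]
        simp
      rw [e1, e2]; abel
    have key : φ 0 * φ 3 * φ 4 * φb 2 = φ 0 * (φ 3 * (φ 4 * φb 2)) := by
      simp [mul_assoc]
    rw [key, d3, db _ ⟨0, rfl⟩ _ ⟨1, rfl⟩ _ ⟨2, rfl⟩ _ ⟨3, rfl⟩]
    simp [mul_assoc]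
end

section
/- Let V^{•,•} be a bounded double complex. If every element of Z_2^{p,q} that is also d-closed (i.e. ∂-closed and ∂̄-closed) and lies in C_2^{p,q} actually lies in Im ∂ + Im ∂̄ with the stronger property of being d-exact, and if ∂(Z_2^{p,q}) = Im(∂∂̄) in bidegree (p+1,q), then for any α ∈ Z_1^{p,q} (i.e. ∂̄α = 0): the Dolbeault class of α admits a representative α + ∂̄β with ∂(α + ∂̄β) = 0 if and only if α ∈ Z_2^{p,q}. -/
/-- A bounded double complex of complex vector spaces, realised inside an ambient module `M`
with bigraded components `V p q`, differentials `∂` (bidegree (1,0)) and `∂̄` (bidegree (0,1))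
satisfying `∂² = ∂̄² = ∂∂̄ + ∂̄∂ = 0`. -/
structure DoubleComplex (M : Type*) [AddCommGroup M] [Module ℂ M] where
  V : ℤ → ℤ → Submodule ℂ M
  del : M →ₗ[ℂ] M
  delbar : M →ₗ[ℂ] M
  del_mem : ∀ p q : ℤ, ∀ x ∈ V p q, del x ∈ V (p + 1) q
  delbar_mem : ∀ p q : ℤ, ∀ x ∈ V p q, delbar x ∈ V p (q + 1)
  del_sq : ∀ x, del (del x) = 0
  delbar_sq : ∀ x, delbar (delbar x) = 0
  anticomm : ∀ x, del (delbar x) + delbar (del x) = 0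
  bounded : ∃ N : ℕ, ∀ p q : ℤ, (N < p.natAbs ∨ N < q.natAbs) → V p q = ⊥

namespace DoubleComplex

variable {M : Type*} [AddCommGroup M] [Module ℂ M]

/-- The `E_r`-closed elements of bidegree `(p,q)`: `α ∈ V^{p,q}` with `∂̄α = 0` together with
a tower `∂α = ∂̄u₁, ∂u₁ = ∂̄u₂, …, ∂u_{r-2} = ∂̄u_{r-1}` with `u_l ∈ V^{p+l,q-l}`.
For `r = 1` this is just `ker ∂̄ ∩ V^{p,q}`. -/
def Zr (D : DoubleComplex M) (r : ℕ) (p q : ℤ) : Set M :=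
  {α | α ∈ D.V p q ∧ D.delbar α = 0 ∧
    ∃ u : ℕ → M, u 0 = α ∧
      ∀ i : ℕ, i + 1 ≤ r - 1 →
        u (i + 1) ∈ D.V (p + (i : ℤ) + 1) (q - (i : ℤ) - 1) ∧
        D.del (u i) = D.delbar (u (i + 1))}

/-- The `E_r`-exact elements of bidegree `(p,q)`: for `r = 1` these are `Im ∂̄ ∩ V^{p,q}`;
for `r ≥ 2` these are the `α = ∂ζ + ∂̄ξ` with `ζ` satisfying a tower
`∂̄ζ = ∂v_{r-3}, ∂̄v_{r-3} = ∂v_{r-4}, …, ∂̄v₀ = 0` (for `r = 2`: `∂̄ζ = 0`). -/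
def Cr (D : DoubleComplex M) (r : ℕ) (p q : ℤ) : Set M :=
  if r ≤ 1 then
    {α | α ∈ D.V p q ∧ ∃ ξ ∈ D.V p (q - 1), α = D.delbar ξ}
  else
    {α | α ∈ D.V p q ∧ ∃ ζ ∈ D.V (p - 1) q, ∃ ξ ∈ D.V p (q - 1), ∃ w : ℕ → M,
      α = D.del ζ + D.delbar ξ ∧ w 0 = ζ ∧
      (∀ j : ℕ, j + 1 ≤ r - 2 → D.delbar (w j) = D.del (w (j + 1))) ∧
      D.delbar (w (r - 2)) = 0}

end DoubleComplex

/-- Abstract form of Lemma 4.2: in a double complex in which every `d`-closed `E_2`-exact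
`E_2`-closed element is `d`-exact and `∂(Z_2^{p,q}) = Im(∂∂̄)` in bidegree `(p+1,q)`, a
`∂̄`-closed `α ∈ V^{p,q}` has a `d`-closed Dolbeault representative `α + ∂̄β` iff `α ∈ Z_2^{p,q}`. -/
theorem stmt16 {M : Type*} [AddCommGroup M] [Module ℂ M] (D : DoubleComplex M) (p q : ℤ)
    (h1 : ∀ α ∈ D.Zr 2 p q, D.del α = 0 → D.delbar α = 0 → α ∈ D.Cr 2 p q →
      ∃ β : M, α = D.del β + D.delbar β)
    (h2 : {x : M | ∃ γ ∈ D.Zr 2 p q, x = D.del γ} =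
          {x : M | ∃ ξ ∈ D.V p (q - 1), x = D.del (D.delbar ξ)}) :
    ∀ α ∈ D.V p q, D.delbar α = 0 →
      ((∃ β ∈ D.V p (q - 1), D.del (α + D.delbar β) = 0) ↔ α ∈ D.Zr 2 p q) := by
  intro α hα hαbar
  constructor
  · rintro ⟨β, hβ, hd⟩
    refine ⟨hα, hαbar, fun n => if n = 0 then α else D.del β, rfl, ?_⟩
    intro i hi
    have hi0 : i = 0 := by omega
    subst hi0
    have h3 : D.del α + D.del (D.delbar β) = 0 := by rw [← map_add]; exact hd
    have h4 := D.anticomm β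
    have h5 : D.del α = D.delbar (D.del β) := by
      have := eq_neg_of_add_eq_zero_left h3
      rw [this, eq_neg_of_add_eq_zero_left h4, neg_neg]
    constructor
    · simp only [if_neg (by norm_num : (0:ℕ) + 1 ≠ 0)]
      have := D.del_mem p (q - 1) β hβ
      convert this using 2 <;> push_cast <;> ring
    · simpa using h5
  · rintro ⟨hαV, hαb, u, hu0, htower⟩
    have hmem : D.del α ∈ {x : M | ∃ γ ∈ D.Zr 2 p q, x = D.del γ} :=
      ⟨α, ⟨hαV, hαb, u, hu0, htower⟩, rfl⟩
    rw [h2] at hmem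
    obtain ⟨ξ, hξ, hx⟩ := hmem
    refine ⟨-ξ, neg_mem hξ, ?_⟩
    rw [map_neg, map_add, map_neg, hx]
    abel
end
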